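/- Let S ⊆ S^{d-1} be a sphere of dimension at least 1, let T be an S-stable set, and let u ∈ S. Then there exists η_0 = η_0(S,T,u) > 0 such that for all 0 < η < η_0: T ∩ S_η(S,u) is equivalent to T ∩ S_{η_0}(S,u), and T is S_η(S,u)-stable. -/

import Mathlib

open scoped InnerProductSpace ENNReal Classical
open MeasureTheory

noncomputable section

namespace BootstrapU

/-- Euclidean space `ℝ^d`. -/
abbrev E (d : ℕ) : Type := EuclideanSpace ℝ (Fin d)

/-- The embedding of the lattice `ℤ^d` into `ℝ^d`. -/
def toE {d : ℕ} (v : Fin d → ℤ) : E d :=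
  (EuclideanSpace.equiv (Fin d) ℝ).symm fun i => (v i : ℝ)

/-- The unit sphere `S^{d-1}` of `ℝ^d`. -/
def unitSphere (d : ℕ) : Set (E d) := Metric.sphere 0 1

/-- The rational directions of the sphere: unit vectors whose line meets `ℤ^d ∖ {0}`. -/
def ratSphere (d : ℕ) : Set (E d) :=
  {w | w ∈ unitSphere d ∧ ∃ x : Fin d → ℤ, x ≠ 0 ∧ ∃ c : ℝ, toE x = c • w}

/-- `L_R`: vectors lying on a line spanned by a non-zero integer vector of norm at most `R`. -/
def LR (d : ℕ) (R : ℝ) : Set (E d) :=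
  {w | ∃ x : Fin d → ℤ, x ≠ 0 ∧ ‖toE x‖ ≤ R ∧ ∃ c : ℝ, w = c • toE x}

/-- One step of the bootstrap process with rules `Us`. -/
def bstep {G : Type*} [AddCommGroup G] (Us : Set (Finset G)) (A : Set G) : Set G :=
  A ∪ {x | ∃ X ∈ Us, ∀ y ∈ X, x + y ∈ A}

/-- The closure `[A]` of the bootstrap process with rules `Us`. -/
def bclosure {G : Type*} [AddCommGroup G] (Us : Set (Finset G)) (A : Set G) : Set G :=
  ⋃ t : ℕ, (bstep Us)^[t] A

/-- A `d`-dimensional update family: a finite collection of finite non-empty subsets of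
`ℤ^d ∖ {0}`. -/
def IsUpdateFamily {d : ℕ} (U : Finset (Finset (Fin d → ℤ))) : Prop :=
  ∀ X ∈ U, X.Nonempty ∧ (0 : Fin d → ℤ) ∉ X

/-- The update rules reduced modulo `n`, acting on the torus `(ℤ/nℤ)^d`. -/
def torusRules (d n : ℕ) (U : Finset (Finset (Fin d → ℤ))) : Set (Finset (Fin d → ZMod n)) :=
  ↑(U.image fun X => X.image fun v i => (v i : ZMod n))

/-- The Bernoulli product measure with density `p`, on subsets of `ι` encoded as
indicator functions `ι → Bool`: the unique probability measure giving each finite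
cylinder event its product probability. -/
def bernoulliP (ι : Type*) (p : ℝ) : Measure (ι → Bool) :=
  if h : ∃ μ : Measure (ι → Bool), IsProbabilityMeasure μ ∧
      ∀ (s : Finset ι) (f : ι → Bool),
        μ {ω | ∀ i ∈ s, ω i = f i} =
          ∏ i ∈ s, (if f i then ENNReal.ofReal p else ENNReal.ofReal (1 - p))
  then h.choose else 0

/-- The probability that a `p`-random subset of the torus `(ℤ/nℤ)^d` percolates. -/
def percTorus (d n : ℕ) (U : Finset (Finset (Fin d → ℤ))) (p : ℝ) : ℝ≥0∞ :=
  bernoulliP (Fin d → ZMod n) p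
    {ω | bclosure (torusRules d n U) {x | ω x = true} = Set.univ}

/-- The critical probability `p_c((ℤ/nℤ)^d, U)`. -/
def pcTorus (d n : ℕ) (U : Finset (Finset (Fin d → ℤ))) : ℝ :=
  sInf {p : ℝ | 0 < p ∧ p ≤ 1 ∧ 1 / 2 ≤ percTorus d n U p}

/-- The probability that a `p`-random subset of `ℤ^d` percolates. -/
def percZ (d : ℕ) (U : Finset (Finset (Fin d → ℤ))) (p : ℝ) : ℝ≥0∞ :=
  bernoulliP (Fin d → ℤ) p
    {ω | bclosure (↑U : Set (Finset (Fin d → ℤ))) {x | ω x = true} = Set.univ}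

/-- The critical probability `p_c(ℤ^d, U)`. -/
def pcZ (d : ℕ) (U : Finset (Finset (Fin d → ℤ))) : ℝ :=
  sInf {p : ℝ | 0 < p ∧ p ≤ 1 ∧ 1 / 2 ≤ percZ d U p}

/-- The discrete half-space `H_u ⊆ ℤ^d`. -/
def halfLat {d : ℕ} (u : E d) : Set (Fin d → ℤ) := {x | ⟪toE x, u⟫_ℝ < 0}

/-- The stable set `S(U)` of an update family. -/
def stableSet (d : ℕ) (U : Finset (Finset (Fin d → ℤ))) : Set (E d) :=
  {u | u ∈ unitSphere d ∧
    bclosure (↑U : Set (Finset (Fin d → ℤ))) (halfLat u) = halfLat u}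

/-- The centre of a sphere embedded in the unit sphere: the unique point of the affine
span of `S` equidistant from all points of `S`. -/
def sphCenter {d : ℕ} (S : Set (E d)) : E d :=
  if h : ∃ c : E d, c ∈ affineSpan ℝ S ∧ ∃ r : ℝ, ∀ x ∈ S, dist x c = r then h.choose else 0

/-- The sphere `S_η(S, u) = {v ∈ S : ‖u - v‖ = η}`. -/
def sSphere {d : ℕ} (S : Set (E d)) (u : E d) (η : ℝ) : Set (E d) :=
  {v | v ∈ S ∧ ‖u - v‖ = η}

/-- `S` is a `k`-dimensional sphere of positive radius embedded in the unit sphere: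
the intersection of `S^{d-1}` with a `(k+1)`-dimensional affine subspace. -/
def IsEmbSphere (d k : ℕ) (S : Set (E d)) : Prop :=
  ∃ A : AffineSubspace ℝ (E d), Module.finrank ℝ A.direction = k + 1 ∧
    (∃ y ∈ A, ‖y‖ < 1) ∧ S = ↑A ∩ unitSphere d

/-- `H` is an open hemisphere of the sphere `S`: the intersection of `S` with an open
half-space whose boundary hyperplane contains the centre of `S`. -/
def IsOpenHemi {d : ℕ} (S H : Set (E d)) : Prop :=
  ∃ u : E d, u ≠ 0 ∧ u ∈ (affineSpan ℝ S).direction ∧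
    H = {x | x ∈ S ∧ 0 < ⟪x - sphCenter S, u⟫_ℝ}

/-- `T` is an `S`-stable set: `T ∩ S` is a finite intersection of finite unions of
closed hemispheres of `S`. -/
def IsStableIn {d : ℕ} (S T : Set (E d)) : Prop :=
  ∃ (m : ℕ) (Y : Fin m → Finset (E d)),
    (∀ i, ∀ y ∈ Y i, y ≠ 0 ∧ y ∈ (affineSpan ℝ S).direction) ∧
    T ∩ S = S ∩ ⋂ i, ⋃ y ∈ Y i, {x | 0 ≤ ⟪x - sphCenter S, y⟫_ℝ}

/-- Two subsets of `ℝ^d` are equivalent if one is the image of the other under a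
composition of translations, dilations and rotations. -/
def SimEquiv {d : ℕ} (A B : Set (E d)) : Prop :=
  ∃ (c : ℝ) (O : E d ≃ₗᵢ[ℝ] E d) (b : E d), 0 < c ∧
    LinearMap.det O.toLinearEquiv.toLinearMap = 1 ∧
    B = (fun x => c • O x + b) '' A

/-- Given a function `r` on spheres, `rhoAux r S T u` is the eventual value of
`r (S_η(S,u)) T` for all sufficiently small `η > 0` if `u ∈ T` (and this eventual
value exists), and `0` otherwise. -/
def rhoAux {d : ℕ} (r : Set (E d) → Set (E d) → ℕ) (S T : Set (E d)) (u : E d) : ℕ :=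
  if u ∈ T then
    (if h : ∃ n : ℕ, ∃ η0 : ℝ, 0 < η0 ∧ ∀ η : ℝ, 0 < η → η < η0 → r (sSphere S u η) T = n
      then h.choose else 0)
  else 0

/-- The resistance function `r^k`, applied to `(k-1)`-dimensional spheres `S` and
`S`-stable sets `T`. -/
def resR (d : ℕ) : ℕ → Set (E d) → Set (E d) → ℕ
  | 0, _, _ => 1
  | k + 1, S, T =>
      sInf {n : ℕ | ∃ H : Set (E d), IsOpenHemi S H ∧
        n = sSup {m : ℕ | ∃ u ∈ H, m = rhoAux (resR d k) S T u} + 1}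

/-- The induced resistance `ρ^k`, applied to `k`-dimensional spheres `S`, `S`-stable
sets `T` and `u ∈ S`. -/
def resRho (d k : ℕ) (S T : Set (E d)) (u : E d) : ℕ := rhoAux (resR d k) S T u

/-- The resistance `r(U) = r^d(S^{d-1}; S(U))` of an update family. -/
def resistance (d : ℕ) (U : Finset (Finset (Fin d → ℤ))) : ℕ :=
  resR d d (unitSphere d) (stableSet d U)

/-- The open hemisphere of `S^{d-1}` with pole `u`. -/
def openHemi (d : ℕ) (u : E d) : Set (E d) := {v | v ∈ unitSphere d ∧ 0 < ⟪v, u⟫_ℝ}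

/-- The closed hemisphere of `S^{d-1}` with pole `u`. -/
def closedHemi (d : ℕ) (u : E d) : Set (E d) := {v | v ∈ unitSphere d ∧ 0 ≤ ⟪v, u⟫_ℝ}

/-- The interior of a subset of the sphere `S^{d-1}`, in the topology of the sphere. -/
def sphInt (d : ℕ) (T : Set (E d)) : Set (E d) :=
  {u | u ∈ unitSphere d ∧ ∃ ε : ℝ, 0 < ε ∧ ∀ v ∈ unitSphere d, dist v u < ε → v ∈ T}

/-- `U` is supercritical: some open hemisphere misses the stable set. -/
def Supercritical (d : ℕ) (U : Finset (Finset (Fin d → ℤ))) : Prop :=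
  ∃ u ∈ unitSphere d, openHemi d u ∩ stableSet d U = ∅

/-- `U` is critical: some closed hemisphere meets the stable set in a set with empty
interior, and every open hemisphere meets the stable set. -/
def Critical (d : ℕ) (U : Finset (Finset (Fin d → ℤ))) : Prop :=
  (∃ u ∈ unitSphere d, sphInt d (closedHemi d u ∩ stableSet d U) = ∅) ∧
    ∀ u ∈ unitSphere d, (openHemi d u ∩ stableSet d U).Nonempty

/-- `U` is subcritical: every closed hemisphere meets the stable set in a set with
non-empty interior. -/
def Subcritical (d : ℕ) (U : Finset (Finset (Fin d → ℤ))) : Prop :=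
  ∀ u ∈ unitSphere d, (sphInt d (closedHemi d u ∩ stableSet d U)).Nonempty

/-- The iterated logarithm: `iterLog 0 x = x` and `iterLog (r+1) x = log (iterLog r x)`. -/
def iterLog : ℕ → ℝ → ℝ
  | 0, x => x
  | r + 1, x => Real.log (iterLog r x)

/-- The stable set `S(F)` of a general finite collection of finite subsets of `ℤ^d`. -/
def famStable (d : ℕ) (F : Finset (Finset (Fin d → ℤ))) : Set (E d) :=
  {u | u ∈ unitSphere d ∧ ∀ X ∈ F, ∃ x ∈ X, 0 ≤ ⟪toE x, u⟫_ℝ}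

/-- The span `⟨F⟩` of a family: the span of the union of its rules. -/
def famSpan (d : ℕ) (F : Finset (Finset (Fin d → ℤ))) : Submodule ℝ (E d) :=
  Submodule.span ℝ {y | ∃ X ∈ F, ∃ x ∈ X, y = toE x}

/-- The induced family `F[W] = {X ∩ W^⊥ : X ∈ F, X ⊆ H(W)}`. -/
def induced (d : ℕ) (F : Finset (Finset (Fin d → ℤ))) (W : Set (E d)) :
    Finset (Finset (Fin d → ℤ)) :=
  (F.filter fun X => ∀ x ∈ X, ∀ u ∈ W, ⟪toE x, u⟫_ℝ ≤ 0).image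
    fun X => X.filter fun x => ∀ u ∈ W, ⟪toE x, u⟫_ℝ = 0

/-- The sphere `S(W) = S^{d-1} ∩ W^⊥`. -/
def sphereOf (d : ℕ) (W : Set (E d)) : Set (E d) :=
  {x | x ∈ unitSphere d ∧ x ∈ (Submodule.span ℝ W)ᗮ}

/-- The projection `π(u, W^⊥)`: the unique `v ∈ S(W)` such that `u = w + λ • v` with
`w ∈ span W` and `λ > 0`. -/
def projDir {d : ℕ} (W : Set (E d)) (u : E d) : E d :=
  if h : ∃ v : E d, v ∈ sphereOf d W ∧
      ∃ w ∈ Submodule.span ℝ W, ∃ lam : ℝ, 0 < lam ∧ u = w + lam • v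
  then h.choose else 0

/-- The Voronoi cell of `u` with respect to the finite set `Q ⊆ S^{d-1}`. -/
def cellOf {d : ℕ} (Q : Finset (E d)) (u : E d) : Set (E d) :=
  {w | w ∈ unitSphere d ∧ ∀ v ∈ Q, ⟪v, w⟫_ℝ ≤ ⟪u, w⟫_ℝ}

/-- `Q` is quasistable for range `R`. -/
def IsQuasistable (d : ℕ) (R : ℝ) (Q : Finset (E d)) : Prop :=
  ↑Q ⊆ ratSphere d ∧
  (∀ u ∈ unitSphere d, ∃ q ∈ Q, 0 < ⟪q, u⟫_ℝ) ∧
  ∀ u ∈ Q, ∀ w ∈ LR d R,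
    ((cellOf Q u ∩ {x | ⟪x, w⟫_ℝ = 0}).Nonempty ↔ ⟪u, w⟫_ℝ = 0)

/-- The polytope `P(W)` determined by the quasistable set `Q`. -/
def polyP (d : ℕ) (Q : Finset (E d)) (W : Set (E d)) : Set (E d) :=
  {x | (∀ u ∈ Q, ⟪x, u⟫_ℝ ≤ 1) ∧ ∀ u ∈ W, ⟪x, u⟫_ℝ = 1}

/-- The stretched (tubular) polytope `P(W, w)`. -/
def polyPw (d : ℕ) (Q : Finset (E d)) (W : Set (E d)) (w : E d) : Set (E d) :=
  {x | (∀ u ∈ Q, ⟪x - (if 0 ≤ ⟪u, w⟫_ℝ then w else 0), u⟫_ℝ ≤ 1) ∧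
    ∀ u ∈ W, ⟪x - (if 0 ≤ ⟪u, w⟫_ℝ then w else 0), u⟫_ℝ = 1}

/-- The buffer `E(H)` of a subspace `H` with respect to the sphere `S` and radii `del`,
where `del (i+1)` is the radius `δ_i` used for subspaces of dimension `i+1`, and the
buffer of the zero subspace is empty. -/
def buffer {m : ℕ} (S : Set (E m)) (del : ℕ → ℝ) (H : Submodule ℝ (E m)) : Set (E m) :=
  if Module.finrank ℝ H = 0 then ∅
  else {z | z ∈ S ∧ Metric.infDist z (H : Set (E m)) < del (Module.finrank ℝ H)}

/-- The expanded buffer `E⁺(H)`. -/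
def expBuffer {m : ℕ} (S : Set (E m)) (del : ℕ → ℝ) (H : Submodule ℝ (E m)) : Set (E m) :=
  if Module.finrank ℝ H = 0 then ∅
  else {z | z ∈ S ∧ Metric.infDist z (H : Set (E m)) < 3 * del (Module.finrank ℝ H)}

/-- `(ℝ^{k+1}, S, Hs, del)` is a spherical buffer system, where `del j` denotes `δ_{j-1}`
(so `del 0 = δ_{-1}` is the radius of `S`). -/
def IsSBS (k : ℕ) (S : Set (E (k + 1))) (Hs : Finset (Submodule ℝ (E (k + 1))))
    (del : ℕ → ℝ) : Prop :=
  0 < del 0 ∧ S = Metric.sphere 0 (del 0) ∧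
  (∀ H ∈ Hs, H ≠ ⊤) ∧ (∀ H ∈ Hs, ∀ H' ∈ Hs, H ⊓ H' ∈ Hs) ∧
  ∀ i < k, 0 < del (i + 1) ∧ del (i + 1) < del i / 3

/-- The set `Q̄(B)` of a spherical buffer system. -/
def QbarSBS (k : ℕ) (S : Set (E (k + 1))) (Hs : Finset (Submodule ℝ (E (k + 1))))
    (del : ℕ → ℝ) : Set (E (k + 1)) :=
  S ∩ ⋃ H ∈ insert (⊤ : Submodule ℝ (E (k + 1))) Hs,
    ((H : Set (E (k + 1))) \ ⋃ H' ∈ Hs, ⋃ (_ : H' < H), buffer S del H')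

/-- A good spherical buffer system. -/
def IsGoodSBS (k : ℕ) (S : Set (E (k + 1))) (Hs : Finset (Submodule ℝ (E (k + 1))))
    (del : ℕ → ℝ) : Prop :=
  IsSBS k S Hs del ∧
  ∀ H ∈ Hs, ∀ H' ∈ Hs, ¬H ≤ H' → ¬H' ≤ H →
    expBuffer S del H ∩ expBuffer S del H' ⊆ buffer S del (H ⊓ H')

/-- The set `{±e_1, …, ±e_d} ⊆ ℤ^d`. -/
def basisPM (d : ℕ) : Finset (Fin d → ℤ) :=
  (Finset.univ.image fun i : Fin d => Pi.single i (1 : ℤ)) ∪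
    (Finset.univ.image fun i : Fin d => Pi.single i (-1 : ℤ))

/-- The `r`-neighbour update family `N_r^d`. -/
def Nrd (d r : ℕ) : Finset (Finset (Fin d → ℤ)) :=
  (basisPM d).powerset.filter fun X => X.card = r

lemma sphCenter_eq_of {d : ℕ} (S' : Set (E d)) (c0 : E d) (ρ0 : ℝ) (hρ : 0 < ρ0)
    (D : Submodule ℝ (E d)) (w0 : E d) (hw0 : w0 ∈ D) (hw0ne : w0 ≠ 0)
    (hsub : ∀ e ∈ D, ‖e‖ = ρ0 → c0 + e ∈ S')
    (hS'sub : ∀ x ∈ S', x - c0 ∈ D)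
    (hdist : ∀ x ∈ S', dist x c0 = ρ0) :
    sphCenter S' = c0 := by
  -- normalized vectors in D of norm ρ0
  have hmk : ∀ v : E d, v ∈ D → v ≠ 0 → ((ρ0 / ‖v‖) • v ∈ D ∧ ‖(ρ0 / ‖v‖) • v‖ = ρ0) := by
    intro v hv hvne
    have hvn : 0 < ‖v‖ := norm_pos_iff.mpr hvne
    refine ⟨D.smul_mem _ hv, ?_⟩
    rw [norm_smul, Real.norm_eq_abs, abs_of_pos (div_pos hρ hvn)]
    field_simp
  obtain ⟨hd0, hn0⟩ := hmk w0 hw0 hw0ne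
  set e0 : E d := (ρ0 / ‖w0‖) • w0 with he0
  have hp1 : c0 + e0 ∈ S' := hsub _ hd0 hn0
  have hp2 : c0 + (-e0) ∈ S' := hsub _ (D.neg_mem hd0) (by rwa [norm_neg])
  have hc0span : c0 ∈ affineSpan ℝ S' := by
    have h1 : c0 + e0 ∈ affineSpan ℝ S' := mem_affineSpan ℝ hp1
    have h2 : c0 + (-e0) ∈ affineSpan ℝ S' := mem_affineSpan ℝ hp2
    have := AffineSubspace.smul_vsub_vadd_mem (affineSpan ℝ S') (1/2 : ℝ) h1 h2 h2
    have heq : (1/2 : ℝ) • ((c0 + e0) -ᵥ (c0 + (-e0))) +ᵥ (c0 + (-e0)) = c0 := by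
      rw [vsub_eq_sub, vadd_eq_add]
      have : (c0 + e0) - (c0 + (-e0)) = e0 + e0 := by abel
      rw [this, smul_add]
      rw [show ((1:ℝ)/2) • e0 + (1/2 : ℝ) • e0 = ((1:ℝ)/2 + 1/2) • e0 by rw [add_smul]]
      norm_num
    rwa [heq] at this
  have key : ∀ c' : E d, c' ∈ affineSpan ℝ S' → (∃ r', ∀ x ∈ S', dist x c' = r') → c' = c0 := by
    intro c' hc' ⟨r', hr'⟩
    have hle : affineSpan ℝ S' ≤ AffineSubspace.mk' c0 D := by
      apply affineSpan_le.mpr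
      intro x hx
      rw [SetLike.mem_coe, AffineSubspace.mem_mk', vsub_eq_sub]
      exact hS'sub x hx
    have hwD : c' - c0 ∈ D := by
      have := AffineSubspace.vsub_mem_direction hc' hc0span
      rw [vsub_eq_sub] at this
      have hdir := AffineSubspace.direction_le hle
      rw [AffineSubspace.direction_mk'] at hdir
      exact hdir this
    set q := c' - c0 with hq
    have hinner : ∀ e ∈ D, ‖e‖ = ρ0 → ⟪e, q⟫_ℝ = 0 := by
      intro e he hne
      have h1 : dist (c0 + e) c' = r' := hr' _ (hsub _ he hne)
      have h2 : dist (c0 + (-e)) c' = r' := hr' _ (hsub _ (D.neg_mem he) (by rwa [norm_neg]))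
      rw [dist_eq_norm] at h1 h2
      have e1 : c0 + e - c' = e - q := by rw [hq]; abel
      have e2 : c0 + (-e) - c' = -(e + q) := by rw [hq]; abel
      rw [e1] at h1; rw [e2, norm_neg] at h2
      have hsq : ‖e - q‖^2 = ‖e + q‖^2 := by rw [h1, h2]
      rw [norm_sub_sq_real, norm_add_sq_real] at hsq
      linarith
    by_cases hq0 : q = 0
    · rw [← sub_eq_zero, ← hq]; exact hq0
    · exfalso
      obtain ⟨hd, hn⟩ := hmk q hwD hq0
      have := hinner _ hd hn
      rw [real_inner_smul_left, real_inner_self_eq_norm_sq] at this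
      have hqn : 0 < ‖q‖ := norm_pos_iff.mpr hq0
      have : ρ0 / ‖q‖ * ‖q‖^2 ≠ 0 := by positivity
      exact this ‹ρ0 / ‖q‖ * ‖q‖ ^ 2 = 0›
  have hex : ∃ c : E d, c ∈ affineSpan ℝ S' ∧ ∃ r : ℝ, ∀ x ∈ S', dist x c = r :=
    ⟨c0, hc0span, ρ0, hdist⟩
  rw [sphCenter, dif_pos hex]
  exact key _ hex.choose_spec.1 hex.choose_spec.2

set_option maxHeartbeats 4000000 in
/-- well-definedness of the small spheres `S_η(S, u)`. -/
theorem stable_welldefined (d k : ℕ) (hk : 1 ≤ k) (S T : Set (E d))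
    (hS : IsEmbSphere d k S) (hT : IsStableIn S T) (u : E d) (hu : u ∈ S) :
    ∃ η0 : ℝ, 0 < η0 ∧ ∀ η : ℝ, 0 < η → η < η0 →
      SimEquiv (T ∩ sSphere S u η) (T ∩ sSphere S u η0) ∧
        IsStableIn (sSphere S u η) T := by
  classical
  obtain ⟨A, hdim, ⟨p0, hp0A, hp0n⟩, hSA⟩ := hS
  -- the centre of S, made opaque
  obtain ⟨c, hcA, hcperp, hc1⟩ :
      ∃ c : E d, c ∈ A ∧ (∀ v ∈ A.direction, ⟪c, v⟫_ℝ = 0) ∧ ‖c‖ < 1 := by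
    refine ⟨p0 - ↑(A.direction.orthogonalProjectionOnto p0), ?_, ?_, ?_⟩
    · have hprojmem : (↑(A.direction.orthogonalProjectionOnto p0) : E d) ∈ A.direction :=
        Submodule.coe_mem _
      have := AffineSubspace.vadd_mem_of_mem_direction
        (A.direction.neg_mem hprojmem) hp0A
      rw [vadd_eq_add] at this
      convert this using 1
      abel
    · intro v hv
      have hmem : p0 - ↑(A.direction.orthogonalProjectionOnto p0) ∈ A.directionᗮ :=
        A.direction.sub_starProjection_mem_orthogonal p0
      exact real_inner_comm v _ ▸ (Submodule.mem_orthogonal A.direction _).mp hmem v hv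
    · set q : E d := ↑(A.direction.orthogonalProjectionOnto p0) with hq
      have hqm : q ∈ A.direction := Submodule.coe_mem _
      have hperp : p0 - q ∈ A.directionᗮ := A.direction.sub_starProjection_mem_orthogonal p0
      have h0 : ⟪p0 - q, q⟫_ℝ = 0 := by
        have := (Submodule.mem_orthogonal A.direction _).mp hperp q hqm
        rwa [real_inner_comm] at this
      have hsq : ‖p0‖^2 = ‖p0 - q‖^2 + 2*⟪p0 - q, q⟫_ℝ + ‖q‖^2 := by
        conv_lhs => rw [show p0 = (p0 - q) + q by abel]
        rw [norm_add_sq_real]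
      rw [h0] at hsq
      nlinarith [norm_nonneg (p0 - q), norm_nonneg q, norm_nonneg p0]
  have hnormA : ∀ v ∈ A, ‖v‖^2 = ‖c‖^2 + ‖v - c‖^2 := by
    intro v hv
    have hvc : v - c ∈ A.direction := by
      have := AffineSubspace.vsub_mem_direction hv hcA
      rwa [vsub_eq_sub] at this
    have hv' : v = c + (v - c) := by abel
    have h2 : ‖v‖^2 = ‖c‖^2 + 2*⟪c, v - c⟫_ℝ + ‖v - c‖^2 := by
      conv_lhs => rw [hv']
      rw [norm_add_sq_real]
    rw [h2, hcperp _ hvc]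
    ring
  obtain ⟨r, hr, hr2⟩ : ∃ r : ℝ, 0 < r ∧ r^2 = 1 - ‖c‖^2 :=
    ⟨Real.sqrt (1 - ‖c‖^2), Real.sqrt_pos.mpr (by nlinarith [norm_nonneg c]),
      Real.sq_sqrt (by nlinarith [norm_nonneg c])⟩
  have memS : ∀ v, v ∈ S ↔ v ∈ A ∧ ‖v - c‖ = r := by
    intro v
    constructor
    · rintro hv
      rw [hSA] at hv
      obtain ⟨hvA, hvS⟩ := hv
      have hvA' : v ∈ A := hvA
      have hn : ‖v‖ = 1 := by
        simpa [unitSphere, mem_sphere_zero_iff_norm] using hvS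
      have h2 := hnormA v hvA'
      refine ⟨hvA', ?_⟩
      have e1 : ‖v - c‖^2 = r^2 := by nlinarith
      calc ‖v - c‖ = Real.sqrt (‖v - c‖^2) := (Real.sqrt_sq (norm_nonneg _)).symm
        _ = Real.sqrt (r^2) := by rw [e1]
        _ = r := Real.sqrt_sq (le_of_lt hr)
    · rintro ⟨hvA, hvc⟩
      rw [hSA]
      refine ⟨hvA, ?_⟩
      have h2 := hnormA v hvA
      have hn : ‖v‖^2 = 1 := by rw [h2, hvc]; nlinarith
      have : ‖v‖ = 1 := by nlinarith [norm_nonneg v]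
      simpa [unitSphere, mem_sphere_zero_iff_norm] using this
  obtain ⟨huA, hucr⟩ := (memS u).mp hu
  set w : E d := u - c with hw_def
  have hwnorm : ‖w‖ = r := hucr
  have hwdir : w ∈ A.direction := by
    have := AffineSubspace.vsub_mem_direction huA hcA
    rwa [vsub_eq_sub] at this
  have hwne : w ≠ 0 := by
    intro h
    rw [h, norm_zero] at hwnorm
    exact absurd hwnorm.symm (ne_of_gt hr)
  -- sphCenter S = c
  have hscS : sphCenter S = c := by
    apply sphCenter_eq_of S c r hr A.direction w hwdir hwne
    · intro e he hne
      rw [memS]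
      have : c + e ∈ A := by
        have := AffineSubspace.vadd_mem_of_mem_direction he hcA
        rwa [vadd_eq_add, add_comm] at this
      exact ⟨this, by simpa using hne⟩
    · intro x hx
      have := AffineSubspace.vsub_mem_direction ((memS x).mp hx).1 hcA
      rwa [vsub_eq_sub] at this
    · intro x hx
      rw [dist_eq_norm]
      exact ((memS x).mp hx).2
  -- small-sphere geometry
  obtain ⟨tt, htt_def⟩ : ∃ tt : ℝ → ℝ, ∀ η, tt η = 1 - η^2/(2*r^2) := ⟨_, fun _ => rfl⟩
  obtain ⟨cc, hcc_def⟩ : ∃ cc : ℝ → E d, ∀ η, cc η = c + tt η • w := ⟨_, fun _ => rfl⟩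
  have h2r2 : (0:ℝ) < 2*r^2 := by nlinarith
  have hr2ne : (2:ℝ)*r^2 ≠ 0 := ne_of_gt h2r2
  have hρsq : ∀ η : ℝ, 0 < η → η ≤ r → 0 < r^2 - (tt η)^2 * r^2 := by
    intro η hη hηr
    have hq1 : 0 < η^2/(2*r^2) := div_pos (by nlinarith) h2r2
    have hq2 : η^2/(2*r^2) ≤ 1/2 := by
      rw [div_le_div_iff₀ h2r2 (by norm_num)]
      nlinarith
    have he : r^2 - (tt η)^2 * r^2 = r^2 * ((η^2/(2*r^2)) * (2 - η^2/(2*r^2))) := by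
      rw [htt_def]; ring
    rw [he]
    have h3 : 0 < (η^2/(2*r^2)) * (2 - η^2/(2*r^2)) := by nlinarith
    exact mul_pos (pow_pos hr 2) h3
  obtain ⟨ρ, hρpos, hρ2⟩ : ∃ ρ : ℝ → ℝ, (∀ η : ℝ, 0 < η → η ≤ r → 0 < ρ η) ∧
      (∀ η : ℝ, 0 < η → η ≤ r → (ρ η)^2 = r^2 - (tt η)^2 * r^2) :=
    ⟨fun η => Real.sqrt (r^2 - (tt η)^2 * r^2),
      fun η hη hηr => Real.sqrt_pos.mpr (hρsq η hη hηr),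
      fun η hη hηr => Real.sq_sqrt (le_of_lt (hρsq η hη hηr))⟩
  have hccA : ∀ η : ℝ, cc η ∈ A := by
    intro η
    rw [hcc_def]
    have := AffineSubspace.vadd_mem_of_mem_direction (A.direction.smul_mem (tt η) hwdir) hcA
    rwa [vadd_eq_add, add_comm] at this
  have memSη : ∀ η : ℝ, 0 < η → η ≤ r → ∀ v,
      v ∈ sSphere S u η ↔ (v ∈ A ∧ ⟪v - cc η, w⟫_ℝ = 0 ∧ ‖v - cc η‖ = ρ η) := by
    intro η hη hηr v
    constructor
    · rintro ⟨hvS, huv⟩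
      obtain ⟨hvA, hvc⟩ := (memS v).mp hvS
      have e1 : ⟪w, v - c⟫_ℝ = tt η * r^2 := by
        have huv' : u - v = w - (v - c) := by rw [hw_def]; abel
        have h2 : ‖u - v‖^2 = ‖w‖^2 - 2*⟪w, v - c⟫_ℝ + ‖v - c‖^2 := by
          rw [huv', norm_sub_sq_real]
        rw [huv, hwnorm, hvc] at h2
        have h3 : ⟪w, v - c⟫_ℝ = r^2 - η^2/2 := by linarith
        rw [htt_def, h3]
        field_simp
      have hvcc : v - cc η = (v - c) - tt η • w := by rw [hcc_def]; abel
      have e2 : ⟪v - cc η, w⟫_ℝ = 0 := by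
        rw [hvcc, inner_sub_left, real_inner_smul_left, real_inner_comm, e1,
          real_inner_self_eq_norm_sq, hwnorm]
        ring
      refine ⟨hvA, e2, ?_⟩
      have e3 : ‖v - cc η‖^2 = r^2 - (tt η)^2 * r^2 := by
        rw [hvcc, norm_sub_sq_real, norm_smul, real_inner_smul_right, real_inner_comm, e1,
          hvc, Real.norm_eq_abs, mul_pow, sq_abs, hwnorm]
        ring
      calc ‖v - cc η‖ = Real.sqrt (‖v - cc η‖^2) := (Real.sqrt_sq (norm_nonneg _)).symm
        _ = Real.sqrt ((ρ η)^2) := by rw [e3, hρ2 η hη hηr]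
        _ = ρ η := Real.sqrt_sq (le_of_lt (hρpos η hη hηr))
    · rintro ⟨hvA, h0, hn⟩
      have hvcc : v - c = (v - cc η) + tt η • w := by rw [hcc_def]; abel
      have e1 : ‖v - c‖^2 = r^2 := by
        rw [hvcc, norm_add_sq_real, real_inner_smul_right, h0, norm_smul,
          hn, Real.norm_eq_abs, mul_pow, sq_abs, hwnorm, hρ2 η hη hηr]
        ring
      have hvS : v ∈ S := by
        rw [memS]
        refine ⟨hvA, ?_⟩
        calc ‖v - c‖ = Real.sqrt (‖v - c‖^2) := (Real.sqrt_sq (norm_nonneg _)).symm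
          _ = Real.sqrt (r^2) := by rw [e1]
          _ = r := Real.sqrt_sq (le_of_lt hr)
      refine ⟨hvS, ?_⟩
      have e2 : ⟪w, v - c⟫_ℝ = tt η * r^2 := by
        rw [hvcc, inner_add_right, real_inner_smul_right]
        have h0' : ⟪w, v - cc η⟫_ℝ = 0 := by rw [real_inner_comm]; exact h0
        rw [h0', real_inner_self_eq_norm_sq, hwnorm]
        ring
      have e3 : ‖u - v‖^2 = η^2 := by
        have huv' : u - v = w - (v - c) := by rw [hw_def]; abel
        rw [huv', norm_sub_sq_real, e2, hwnorm, e1, htt_def]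
        field_simp
        ring
      calc ‖u - v‖ = Real.sqrt (‖u - v‖^2) := (Real.sqrt_sq (norm_nonneg _)).symm
        _ = Real.sqrt (η^2) := by rw [e3]
        _ = η := Real.sqrt_sq (le_of_lt hη)
  -- the stable-set data
  obtain ⟨m, Y, hYdir, hTS⟩ := hT
  rw [hscS] at hTS
  have hSsubA : S ⊆ ↑A := by rw [hSA]; exact Set.inter_subset_left
  have hdirle : (affineSpan ℝ S).direction ≤ A.direction :=
    AffineSubspace.direction_le (affineSpan_le.mpr hSsubA)
  have hYA : ∀ i, ∀ y ∈ Y i, y ≠ 0 ∧ y ∈ A.direction := by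
    intro i y hy
    exact ⟨(hYdir i y hy).1, hdirle (hYdir i y hy).2⟩
  -- choice of ε
  obtain ⟨ε, hε, hεle⟩ : ∃ ε : ℝ, 0 < ε ∧
      ∀ i, ∀ y ∈ Y i, ⟪w, y⟫_ℝ ≠ 0 → ε * ‖y‖ ≤ |⟪w, y⟫_ℝ| / 2 := by
    set B : Finset (E d) := Finset.univ.biUnion Y with hB
    set C : Finset (E d) := B.filter (fun y => ⟪w, y⟫_ℝ ≠ 0) with hC
    by_cases hCne : C.Nonempty
    · refine ⟨C.inf' hCne (fun y => |⟪w, y⟫_ℝ| / (2 * ‖y‖)), ?_, ?_⟩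
      · rw [Finset.lt_inf'_iff]
        intro y hy
        have hyB : y ∈ B := (Finset.mem_filter.mp hy).1
        obtain ⟨i, _, hyY⟩ := Finset.mem_biUnion.mp hyB
        have hyne : y ≠ 0 := (hYA i y hyY).1
        have h1 : 0 < |⟪w, y⟫_ℝ| := abs_pos.mpr (Finset.mem_filter.mp hy).2
        have h2 : 0 < ‖y‖ := norm_pos_iff.mpr hyne
        exact div_pos h1 (by linarith)
      · intro i y hy hne
        have hyC : y ∈ C := Finset.mem_filter.mpr
          ⟨Finset.mem_biUnion.mpr ⟨i, Finset.mem_univ i, hy⟩, hne⟩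
        have hle := Finset.inf'_le (fun y => |⟪w, y⟫_ℝ| / (2 * ‖y‖)) hyC
        have h2 : 0 < ‖y‖ := norm_pos_iff.mpr (hYA i y hy).1
        rw [le_div_iff₀ (by linarith)] at hle
        linarith
    · refine ⟨1, one_pos, ?_⟩
      intro i y hy hne
      exact absurd (Finset.mem_filter.mpr
        ⟨Finset.mem_biUnion.mpr ⟨i, Finset.mem_univ i, hy⟩, hne⟩)
        (fun h => hCne ⟨y, h⟩)
  refine ⟨min r ε, lt_min hr hε, ?_⟩
  set η0 : ℝ := min r ε with hη0_def
  have hη0r : η0 ≤ r := min_le_left _ _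
  have hη0ε : η0 ≤ ε := min_le_right _ _
  have hη0pos : 0 < η0 := lt_min hr hε
  -- sign analysis of the half-space constraints on small spheres
  have hXC : ∀ η : ℝ, 0 < η → η ≤ η0 → ∀ x ∈ sSphere S u η, ∀ i, ∀ y ∈ Y i,
      ((0 < ⟪w, y⟫_ℝ → 0 ≤ ⟪x - c, y⟫_ℝ) ∧ (⟪w, y⟫_ℝ < 0 → ⟪x - c, y⟫_ℝ < 0) ∧
        (⟪w, y⟫_ℝ = 0 → ⟪x - c, y⟫_ℝ = ⟪x - cc η, y⟫_ℝ)) := by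
    intro η hη hηle x hx i y hy
    have hux : ‖u - x‖ = η := hx.2
    have hxc : x - c = w - (u - x) := by rw [hw_def]; abel
    have hsplit : ⟪x - c, y⟫_ℝ = ⟪w, y⟫_ℝ - ⟪u - x, y⟫_ℝ := by
      rw [hxc, inner_sub_left]
    have hcs : |⟪u - x, y⟫_ℝ| ≤ η * ‖y‖ := by
      calc |⟪u - x, y⟫_ℝ| ≤ ‖u - x‖ * ‖y‖ := abs_real_inner_le_norm _ _
        _ = η * ‖y‖ := by rw [hux]
    have hbound : ⟪w, y⟫_ℝ ≠ 0 → |⟪u - x, y⟫_ℝ| ≤ |⟪w, y⟫_ℝ| / 2 := by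
      intro hne
      have h1 := hεle i y hy hne
      have h2 : η * ‖y‖ ≤ ε * ‖y‖ :=
        mul_le_mul_of_nonneg_right (le_trans hηle hη0ε) (norm_nonneg y)
      linarith
    refine ⟨?_, ?_, ?_⟩
    · intro hpos
      have hb := hbound (ne_of_gt hpos)
      rw [abs_of_pos hpos] at hb
      have hb2 := abs_le.mp hb
      rw [hsplit]; linarith [hb2.1, hb2.2]
    · intro hneg
      have hb := hbound (ne_of_lt hneg)
      rw [abs_of_neg hneg] at hb
      have hb2 := abs_le.mp hb
      rw [hsplit]; linarith [hb2.1, hb2.2]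
    · intro h0
      have hxcc : x - c = (x - cc η) + tt η • w := by rw [hcc_def]; abel
      rw [hxcc, inner_add_left, real_inner_smul_left, h0]
      ring
  -- the core membership criterion on small spheres
  have hcore : ∀ η : ℝ, 0 < η → η ≤ η0 → ∀ x ∈ sSphere S u η,
      (x ∈ T ↔ ∀ i : Fin m, (∃ y ∈ Y i, 0 < ⟪w, y⟫_ℝ) ∨
        ∃ y ∈ Y i, ⟪w, y⟫_ℝ = 0 ∧ 0 ≤ ⟪x - cc η, y⟫_ℝ) := by
    intro η hη hηle x hx
    have hxS : x ∈ S := hx.1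
    have hmem : x ∈ T ↔ ∀ i : Fin m, ∃ y ∈ Y i, 0 ≤ ⟪x - c, y⟫_ℝ := by
      constructor
      · intro hxT
        have hm : x ∈ T ∩ S := ⟨hxT, hxS⟩
        rw [hTS] at hm
        intro i
        have h2 := hm.2
        rw [Set.mem_iInter] at h2
        have h3 := h2 i
        simp only [Set.mem_iUnion, Set.mem_setOf_eq] at h3
        obtain ⟨y, hy, hle⟩ := h3
        exact ⟨y, hy, hle⟩
      · intro hall
        have hm : x ∈ S ∩ ⋂ i, ⋃ y ∈ Y i, {x | 0 ≤ ⟪x - c, y⟫_ℝ} := by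
          refine ⟨hxS, ?_⟩
          rw [Set.mem_iInter]
          intro i
          obtain ⟨y, hy, hle⟩ := hall i
          simp only [Set.mem_iUnion, Set.mem_setOf_eq]
          exact ⟨y, hy, hle⟩
        rw [← hTS] at hm
        exact hm.1
    rw [hmem]
    constructor
    · intro hall i
      obtain ⟨y, hy, hle⟩ := hall i
      obtain ⟨hP, hN, hZ⟩ := hXC η hη hηle x hx i y hy
      rcases lt_trichotomy (⟪w, y⟫_ℝ) 0 with hlt | heq | hgt
      · exact absurd hle (not_le.mpr (hN hlt))
      · exact Or.inr ⟨y, hy, heq, by rw [← hZ heq]; exact hle⟩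
      · exact Or.inl ⟨y, hy, hgt⟩
    · intro hall i
      rcases hall i with ⟨y, hy, hgt⟩ | ⟨y, hy, heq, hle⟩
      · exact ⟨y, hy, (hXC η hη hηle x hx i y hy).1 hgt⟩
      · exact ⟨y, hy, by rw [(hXC η hη hηle x hx i y hy).2.2 heq]; exact hle⟩
  -- a non-zero tangent direction at u
  obtain ⟨y2, hy2dir, hy2span⟩ : ∃ y2 : E d, y2 ∈ A.direction ∧
      y2 ∉ Submodule.span ℝ {w} := by
    by_contra hcon
    push_neg at hcon
    have hle : A.direction ≤ Submodule.span ℝ {w} := fun y hy => hcon y hy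
    have h1 := Submodule.finrank_mono hle
    rw [finrank_span_singleton hwne, hdim] at h1
    omega
  set wp : E d := ⟪w, y2⟫_ℝ • w - (r^2) • y2 with hwp_def
  have hwpdir : wp ∈ A.direction :=
    Submodule.sub_mem _ (A.direction.smul_mem _ hwdir) (A.direction.smul_mem _ hy2dir)
  have hwpperp : ⟪w, wp⟫_ℝ = 0 := by
    rw [hwp_def, inner_sub_right, real_inner_smul_right, real_inner_smul_right,
      real_inner_self_eq_norm_sq, hwnorm]
    ring
  have hr2ne' : (r:ℝ)^2 ≠ 0 := ne_of_gt (pow_pos hr 2)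
  have hwpne : wp ≠ 0 := by
    intro h
    apply hy2span
    rw [hwp_def, sub_eq_zero] at h
    have h3 : y2 = ((r^2)⁻¹ * ⟪w, y2⟫_ℝ) • w := by
      rw [mul_smul, h, inv_smul_smul₀ hr2ne']
    exact Submodule.mem_span_singleton.mpr ⟨_, h3.symm⟩
  -- tangent vectors lie in the direction of the affine span of the small sphere
  have hdirSη : ∀ η : ℝ, 0 < η → η ≤ r → ∀ y, y ∈ A.direction → ⟪w, y⟫_ℝ = 0 →
      y ∈ (affineSpan ℝ (sSphere S u η)).direction := by
    intro η hη hηr y hyd hy0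
    rcases eq_or_ne y 0 with rfl | hyne
    · exact Submodule.zero_mem _
    have hyn : 0 < ‖y‖ := norm_pos_iff.mpr hyne
    set e : E d := (ρ η / ‖y‖) • y with he_def
    have hen : ‖e‖ = ρ η := by
      rw [he_def, norm_smul, Real.norm_eq_abs, abs_of_pos (div_pos (hρpos η hη hηr) hyn)]
      field_simp
    have hed : e ∈ A.direction := A.direction.smul_mem _ hyd
    have hew : ⟪e, w⟫_ℝ = 0 := by
      rw [he_def, real_inner_smul_left, real_inner_comm, hy0]
      ring
    have hp1 : cc η + e ∈ sSphere S u η := by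
      rw [memSη η hη hηr]
      refine ⟨?_, ?_, ?_⟩
      · have := AffineSubspace.vadd_mem_of_mem_direction hed (hccA η)
        rwa [vadd_eq_add, add_comm] at this
      · rw [add_sub_cancel_left]
        exact hew
      · rw [add_sub_cancel_left]
        exact hen
    have hp2 : cc η + (-e) ∈ sSphere S u η := by
      rw [memSη η hη hηr]
      refine ⟨?_, ?_, ?_⟩
      · have := AffineSubspace.vadd_mem_of_mem_direction (A.direction.neg_mem hed) (hccA η)
        rwa [vadd_eq_add, add_comm] at this
      · rw [add_sub_cancel_left, inner_neg_left, hew]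
        ring
      · rw [add_sub_cancel_left, norm_neg]
        exact hen
    have hmem := AffineSubspace.vsub_mem_direction
      (mem_affineSpan ℝ hp1) (mem_affineSpan ℝ hp2)
    rw [vsub_eq_sub] at hmem
    have hk0 : (2 * (ρ η / ‖y‖)) ≠ 0 :=
      ne_of_gt (mul_pos two_pos (div_pos (hρpos η hη hηr) hyn))
    have h2 : (cc η + e) - (cc η + (-e)) = (2 * (ρ η / ‖y‖)) • y := by
      have he2 : (cc η + e) - (cc η + (-e)) = e + e := by abel
      rw [he2, he_def, ← add_smul]
      congr 1
      ring
    rw [h2] at hmem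
    have := Submodule.smul_mem _ (2 * (ρ η / ‖y‖))⁻¹ hmem
    rwa [inv_smul_smul₀ hk0] at this
  -- the centre of the small sphere
  have hscSη : ∀ η : ℝ, 0 < η → η ≤ r → sphCenter (sSphere S u η) = cc η := by
    intro η hη hηr
    apply sphCenter_eq_of _ (cc η) (ρ η) (hρpos η hη hηr)
      (A.direction ⊓ (Submodule.span ℝ {w})ᗮ) wp
      (Submodule.mem_inf.mpr ⟨hwpdir,
        Submodule.mem_orthogonal_singleton_iff_inner_left.mpr
          (by rw [real_inner_comm]; exact hwpperp)⟩) hwpne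
    · intro e he hne
      obtain ⟨hed, heo⟩ := Submodule.mem_inf.mp he
      have hew : ⟪e, w⟫_ℝ = 0 := Submodule.mem_orthogonal_singleton_iff_inner_left.mp heo
      rw [memSη η hη hηr]
      refine ⟨?_, by rw [add_sub_cancel_left]; exact hew, by rw [add_sub_cancel_left]; exact hne⟩
      have := AffineSubspace.vadd_mem_of_mem_direction hed (hccA η)
      rwa [vadd_eq_add, add_comm] at this
    · intro x hx
      obtain ⟨hxA, hx0, hxn⟩ := (memSη η hη hηr x).mp hx
      refine Submodule.mem_inf.mpr ⟨?_,
        Submodule.mem_orthogonal_singleton_iff_inner_left.mpr hx0⟩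
      have := AffineSubspace.vsub_mem_direction hxA (hccA η)
      rwa [vsub_eq_sub] at this
    · intro x hx
      rw [dist_eq_norm]
      exact ((memSη η hη hηr x).mp hx).2.2
  -- conclusions
  intro η hη hηlt
  have hηle : η ≤ η0 := le_of_lt hηlt
  have hηr : η ≤ r := le_trans hηle hη0r
  have hρη : 0 < ρ η := hρpos η hη hηr
  have hρη0 : 0 < ρ η0 := hρpos η0 hη0pos hη0r
  constructor
  · -- SimEquiv
    set csc : ℝ := ρ η0 / ρ η with hcsc_def
    have hcscpos : 0 < csc := div_pos hρη0 hρη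
    have hcscne : csc ≠ 0 := ne_of_gt hcscpos
    refine ⟨csc, LinearIsometryEquiv.refl ℝ (E d), cc η0 - csc • cc η, hcscpos, ?_, ?_⟩
    · have hrfl : (LinearIsometryEquiv.refl ℝ (E d)).toLinearEquiv.toLinearMap
          = LinearMap.id := rfl
      rw [hrfl, LinearMap.det_id]
    · ext x'
      simp only [Set.mem_image, LinearIsometryEquiv.coe_refl, id_eq, Set.mem_inter_iff]
      constructor
      · rintro ⟨hx'T, hx'S⟩
        obtain ⟨hx'A, hx'0, hx'n⟩ := (memSη η0 hη0pos hη0r x').mp hx'S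
        set x : E d := cc η + csc⁻¹ • (x' - cc η0) with hx_def
        have hxcc : x - cc η = csc⁻¹ • (x' - cc η0) := by rw [hx_def]; abel
        have hx'dir : x' - cc η0 ∈ A.direction := by
          have := AffineSubspace.vsub_mem_direction hx'A (hccA η0)
          rwa [vsub_eq_sub] at this
        have hxS : x ∈ sSphere S u η := by
          rw [memSη η hη hηr]
          refine ⟨?_, ?_, ?_⟩
          · have := AffineSubspace.vadd_mem_of_mem_direction
              (A.direction.smul_mem csc⁻¹ hx'dir) (hccA η)
            rw [vadd_eq_add, add_comm] at this
            exact this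
          · rw [hxcc, real_inner_smul_left, hx'0]
            ring
          · rw [hxcc, norm_smul, Real.norm_eq_abs, abs_of_pos (inv_pos.mpr hcscpos), hx'n,
              hcsc_def]
            field_simp
        have hxT : x ∈ T := by
          apply (hcore η hη hηle x hxS).mpr
          intro i
          rcases (hcore η0 hη0pos (le_refl η0) x' hx'S).mp hx'T i with hg | ⟨y, hy, hy0, hyle⟩
          · exact Or.inl hg
          · refine Or.inr ⟨y, hy, hy0, ?_⟩
            rw [hxcc, real_inner_smul_left]
            exact mul_nonneg (le_of_lt (inv_pos.mpr hcscpos)) hyle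
        refine ⟨x, ⟨hxT, hxS⟩, ?_⟩
        rw [hx_def, smul_add, smul_inv_smul₀ hcscne]
        abel
      · rintro ⟨x, ⟨hxT, hxS⟩, rfl⟩
        obtain ⟨hxA, hx0, hxn⟩ := (memSη η hη hηr x).mp hxS
        have hkey : csc • x + (cc η0 - csc • cc η) = cc η0 + csc • (x - cc η) := by
          rw [smul_sub]
          abel
        have hxdir : x - cc η ∈ A.direction := by
          have := AffineSubspace.vsub_mem_direction hxA (hccA η)
          rwa [vsub_eq_sub] at this
        have hkey2 : (csc • x + (cc η0 - csc • cc η)) - cc η0 = csc • (x - cc η) := by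
          rw [smul_sub]
          abel
        have hS0 : csc • x + (cc η0 - csc • cc η) ∈ sSphere S u η0 := by
          rw [memSη η0 hη0pos hη0r]
          refine ⟨?_, ?_, ?_⟩
          · rw [hkey]
            have := AffineSubspace.vadd_mem_of_mem_direction
              (A.direction.smul_mem csc hxdir) (hccA η0)
            rw [vadd_eq_add, add_comm] at this
            exact this
          · rw [hkey2, real_inner_smul_left, hx0]
            ring
          · rw [hkey2, norm_smul, Real.norm_eq_abs, abs_of_pos hcscpos, hxn, hcsc_def]
            field_simp
        refine ⟨?_, hS0⟩
        apply (hcore η0 hη0pos (le_refl η0) _ hS0).mpr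
        intro i
        rcases (hcore η hη hηle x hxS).mp hxT i with hg | ⟨y, hy, hy0, hyle⟩
        · exact Or.inl hg
        · refine Or.inr ⟨y, hy, hy0, ?_⟩
          rw [hkey2, real_inner_smul_left]
          exact mul_nonneg (le_of_lt hcscpos) hyle
  · -- IsStableIn
    refine ⟨m, fun i => if (∃ y ∈ Y i, 0 < ⟪w, y⟫_ℝ) then ({wp, -wp} : Finset (E d))
        else (Y i).filter (fun y => ⟪w, y⟫_ℝ = 0), ?_, ?_⟩
    · intro i y hy
      by_cases hg : ∃ y ∈ Y i, 0 < ⟪w, y⟫_ℝ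
      · simp only [if_pos hg] at hy
        rcases Finset.mem_insert.mp hy with rfl | hy'
        · exact ⟨hwpne, hdirSη η hη hηr wp hwpdir hwpperp⟩
        · rw [Finset.mem_singleton] at hy'
          subst hy'
          refine ⟨neg_ne_zero.mpr hwpne,
            hdirSη η hη hηr _ (A.direction.neg_mem hwpdir) ?_⟩
          rw [inner_neg_right, hwpperp]
          ring
      · simp only [if_neg hg] at hy
        obtain ⟨hyY, hy0⟩ := Finset.mem_filter.mp hy
        exact ⟨(hYA i y hyY).1, hdirSη η hη hηr y (hYA i y hyY).2 hy0⟩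
    · rw [hscSη η hη hηr]
      ext x
      simp only [Set.mem_inter_iff, Set.mem_iInter, Set.mem_iUnion, Set.mem_setOf_eq]
      constructor
      · rintro ⟨hxT, hxS⟩
        refine ⟨hxS, fun i => ?_⟩
        have hc := (hcore η hη hηle x hxS).mp hxT i
        by_cases hg : ∃ y ∈ Y i, 0 < ⟪w, y⟫_ℝ
        · rw [if_pos hg]
          rcases le_total 0 (⟪x - cc η, wp⟫_ℝ) with hle | hle
          · exact ⟨wp, Finset.mem_insert_self _ _, hle⟩
          · refine ⟨-wp, Finset.mem_insert.mpr (Or.inr (Finset.mem_singleton_self _)), ?_⟩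
            rw [inner_neg_right]
            linarith
        · rw [if_neg hg]
          rcases hc with hg' | ⟨y, hy, hy0, hyle⟩
          · exact absurd hg' hg
          · exact ⟨y, Finset.mem_filter.mpr ⟨hy, hy0⟩, hyle⟩
      · rintro ⟨hxS, hall⟩
        refine ⟨?_, hxS⟩
        apply (hcore η hη hηle x hxS).mpr
        intro i
        by_cases hg : ∃ y ∈ Y i, 0 < ⟪w, y⟫_ℝ
        · exact Or.inl hg
        · have h2 := hall i
          rw [if_neg hg] at h2
          obtain ⟨y, hy, hyle⟩ := h2
          obtain ⟨hyY, hy0⟩ := Finset.mem_filter.mp hy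
          exact Or.inr ⟨y, hyY, hy0, hyle⟩

end BootstrapU

end
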